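/- Let J = S^{-1}(C ρ₀) with S* an injective *-homomorphism and ρ₀ = S(ρ) for an invertible state ρ. Let M be a projection-valued measure in A. Then M is extremal in M_J(A,U) if and only if the only projections p₀ ∈ A₀ with S*(p₀) ∈ {M}' are p₀ = 0 and p₀ = I. -/

import Mathlib

open Matrix ComplexOrder Polynomial

set_option linter.unusedSectionVars false
set_option linter.unusedVariables false
set_option maxHeartbeats 1000000

variable {n m : Type*} [Fintype n] [DecidableEq n] [Fintype m] [DecidableEq m]

/-- Partial trace over the first tensor factor `B` of `B ⊗ A`,
realized on matrices indexed by products. -/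
noncomputable def ptrace (X : Matrix (m × n) (m × n) ℂ) : Matrix n n ℂ :=
  Matrix.of fun a b => ∑ i, X (i, a) (i, b)

/-- The Choi matrix of a linear map `Φ : A → B` (on full matrix algebras). -/
noncomputable def choi (Φ : Matrix n n ℂ →ₗ[ℂ] Matrix m m ℂ) : Matrix (m × n) (m × n) ℂ :=
  Matrix.of fun p q => Φ (Matrix.single p.2 q.2 1) p.1 q.1

/-- Hilbert–Schmidt orthogonal complement of a subspace. -/
noncomputable def hsPerp {k : Type*} [Fintype k] (J : Submodule ℂ (Matrix k k ℂ)) :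
    Submodule ℂ (Matrix k k ℂ) where
  carrier := {x | ∀ a ∈ J, Matrix.trace (aᴴ * x) = 0}
  add_mem' := by
    intro x y hx hy a ha
    simp [Matrix.mul_add, hx a ha, hy a ha]
  zero_mem' := by intro a ha; simp
  smul_mem' := by
    intro c x hx a ha
    simp [Matrix.mul_smul, hx a ha]

/-- Hilbert–Schmidt orthogonal complement of the transpose `J^T` of a subspace `J`. -/
def hsPerpT {k : Type*} [Fintype k] (J : Submodule ℂ (Matrix k k ℂ)) : Set (Matrix k k ℂ) :=
  {x | ∀ a ∈ J, Matrix.trace (aᵀᴴ * x) = 0}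

/-- A subspace is positively generated if it is spanned by its positive elements. -/
def PositivelyGenerated {k : Type*} [Fintype k] (J : Submodule ℂ (Matrix k k ℂ)) : Prop :=
  J = Submodule.span ℂ {a : Matrix k k ℂ | a ∈ J ∧ a.PosSemidef}

/-- `P` is the support projection of `X`: a Hermitian idempotent with the same range. -/
def IsSupportProj {k : Type*} [Fintype k] [DecidableEq k] (X P : Matrix k k ℂ) : Prop :=
  P.IsHermitian ∧ P * P = P ∧
    LinearMap.range (Matrix.toLin' P) = LinearMap.range (Matrix.toLin' X)

section AuxHelpers
open Polynomial

section Helpers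

variable {k : Type*} [Fintype k] [DecidableEq k]

lemma psd_smul {A : Matrix k k ℂ} (hA : A.PosSemidef) {c : ℝ} (hc : 0 ≤ c) :
    ((c : ℂ) • A).PosSemidef := by
  constructor
  · unfold Matrix.IsHermitian
    rw [conjTranspose_smul, hA.1]
    simp
  · exact (hA.smul (show (0:ℂ) ≤ (c:ℂ) by exact_mod_cast hc)).2

lemma psd_trace_nonneg {A : Matrix k k ℂ} (hA : A.PosSemidef) : 0 ≤ A.trace := by
  unfold Matrix.trace Matrix.diag
  refine Finset.sum_nonneg fun i _ => ?_
  exact hA.diag_nonneg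

lemma psd_trace_eq_zero {A : Matrix k k ℂ} (hA : A.PosSemidef) (h : A.trace = 0) :
    A = 0 := by
  obtain ⟨B, rfl⟩ : ∃ B : Matrix k k ℂ, A = Bᴴ * B := by
    open scoped MatrixOrder Matrix.Norms.L2Operator in
    exact CStarAlgebra.nonneg_iff_eq_star_mul_self.mp hA.nonneg
  rw [conjTranspose_mul_self_eq_zero (A := B)]
  have htr : ∀ j, (Bᴴ * B) j j = ∑ i, star (B i j) * B i j := by
    intro j; simp [Matrix.mul_apply, conjTranspose_apply]
  rw [Matrix.trace] at h
  have h0 : ∀ j ∈ Finset.univ, (0:ℂ) ≤ (Bᴴ * B).diag j := by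
    intro j _
    rw [Matrix.diag_apply, htr j]
    exact Finset.sum_nonneg fun i _ => star_mul_self_nonneg _
  have hz := (Finset.sum_eq_zero_iff_of_nonneg h0).mp h
  ext i j
  have := hz j (Finset.mem_univ j)
  rw [Matrix.diag_apply, htr j] at this
  have hz2 := (Finset.sum_eq_zero_iff_of_nonneg
    (fun i _ => star_mul_self_nonneg (B i j))).mp this i (Finset.mem_univ i)
  have : B i j = 0 := by
    rcases mul_eq_zero.mp hz2 with h' | h'
    · exact star_eq_zero.mp h'
    · exact h'
  simp [this]

end Helpers

section H2
variable {k : Type*} [Fintype k] [DecidableEq k]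

lemma psd_add_eq_zero {A B : Matrix k k ℂ} (hA : A.PosSemidef) (hB : B.PosSemidef)
    (h : A + B = 0) : A = 0 := by
  have htA := psd_trace_nonneg hA
  have htB := psd_trace_nonneg hB
  have hsum : A.trace + B.trace = 0 := by rw [← trace_add, h, trace_zero]
  have hle : A.trace ≤ 0 := by
    rw [eq_neg_of_add_eq_zero_left hsum]
    exact neg_nonpos.mpr htB
  exact psd_trace_eq_zero hA (le_antisymm hle htA)

lemma proj_psd {P : Matrix k k ℂ} (h1 : P.IsHermitian) (h2 : P * P = P) : P.PosSemidef := by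
  have : P = Pᴴ * P := by rw [h1]; exact h2.symm
  rw [this]; exact posSemidef_conjTranspose_mul_self P

lemma psd_mul_eq_zero {A Q : Matrix k k ℂ} (hA : A.PosSemidef) (hQ : Qᴴ = Q)
    (h : Q * A * Q = 0) : A * Q = 0 := by
  obtain ⟨B, rfl⟩ : ∃ B : Matrix k k ℂ, A = Bᴴ * B := by
    open scoped MatrixOrder Matrix.Norms.L2Operator in
    exact CStarAlgebra.nonneg_iff_eq_star_mul_self.mp hA.nonneg
  have : (B * Q)ᴴ * (B * Q) = 0 := by
    rw [conjTranspose_mul, hQ]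
    calc Q * Bᴴ * (B * Q) = Q * (Bᴴ * B) * Q := by simp only [mul_assoc]
    _ = 0 := h
  have hBQ : B * Q = 0 := conjTranspose_mul_self_eq_zero.mp this
  calc Bᴴ * B * Q = Bᴴ * (B * Q) := by simp only [mul_assoc]
  _ = 0 := by rw [hBQ, Matrix.mul_zero]

end H2

section H3
variable {k : Type*} [Fintype k] [DecidableEq k]

lemma psd_finsum_eq_zero {ι : Type*} {s : Finset ι} {f : ι → Matrix k k ℂ}
    (hf : ∀ i ∈ s, (f i).PosSemidef) (h : ∑ i ∈ s, f i = 0) : ∀ i ∈ s, f i = 0 := by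
  have htr : ∀ i ∈ s, (f i).trace = 0 := by
    have hs : ∑ i ∈ s, (f i).trace = 0 := by
      rw [← trace_sum, h, trace_zero]
    exact (Finset.sum_eq_zero_iff_of_nonneg
      (fun i hi => psd_trace_nonneg (hf i hi))).mp hs
  exact fun i hi => psd_trace_eq_zero (hf i hi) (htr i hi)

lemma pvm_orth {U : Type*} [Fintype U] (M : U → Matrix k k ℂ)
    (hproj : ∀ u, (M u).IsHermitian ∧ M u * M u = M u)
    (hsum : ∑ u, M u = 1) {u v : U} (huv : u ≠ v) : M u * M v = 0 := by
  classical
  have hform : ∀ w, (M w * M v)ᴴ * (M w * M v) = M v * M w * M v := by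
    intro w
    calc (M w * M v)ᴴ * (M w * M v) = M v * M w * (M w * M v) := by
          rw [conjTranspose_mul, (hproj w).1, (hproj v).1]
    _ = M v * (M w * M w) * M v := by simp only [mul_assoc]
    _ = M v * M w * M v := by rw [(hproj w).2]
  have hsumv : ∑ w, M v * M w * M v = M v := by
    rw [← Finset.sum_mul, ← Finset.mul_sum, hsum, Matrix.mul_one, (hproj v).2]
  have herase : ∑ w ∈ Finset.univ.erase v, M v * M w * M v = 0 := by
    have h1 := Finset.add_sum_erase Finset.univ (fun w => M v * M w * M v) (Finset.mem_univ v)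
    rw [hsumv] at h1
    have h2 : M v * M v * M v + ∑ w ∈ Finset.univ.erase v, M v * M w * M v = M v := h1
    have hvv : M v * M v * M v = M v := by rw [(hproj v).2, (hproj v).2]
    rw [hvv] at h2
    exact (add_eq_left).mp h2
  have hz : M v * M u * M v = 0 := psd_finsum_eq_zero (f := fun w => M v * M w * M v)
    (fun w _ => by
      have := posSemidef_conjTranspose_mul_self (M w * M v)
      rw [hform w] at this
      exact this) herase
    u (Finset.mem_erase.mpr ⟨huv, Finset.mem_univ u⟩)
  rw [← hform u] at hz
  exact conjTranspose_mul_self_eq_zero.mp hz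

end H3

noncomputable def eMat {k : Type*} [Fintype k] : Matrix k k ℂ ≃ₗ[ℂ] EuclideanSpace ℂ (k × k) where
  toFun x := WithLp.toLp 2 (fun p : k × k => x p.1 p.2)
  map_add' _ _ := rfl
  map_smul' _ _ := rfl
  invFun y := Matrix.of fun i j => y (i, j)
  left_inv _ := rfl
  right_inv _ := rfl

lemma inner_eMat {k : Type*} [Fintype k] (x y : Matrix k k ℂ) :
    (inner ℂ (eMat x) (eMat y) : ℂ) = Matrix.trace (xᴴ * y) := by
  simp only [PiLp.inner_apply, RCLike.inner_apply, Matrix.trace, Matrix.diag_apply,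
    Matrix.mul_apply, conjTranspose_apply]
  rw [← Finset.univ_product_univ, Finset.sum_product]
  rw [Finset.sum_comm]
  refine Finset.sum_congr rfl fun i _ => Finset.sum_congr rfl fun j _ => ?_
  simp only [eMat, LinearEquiv.coe_mk]
  exact mul_comm _ _

section H5
variable {n m : Type*} [Fintype n] [DecidableEq n] [Fintype m] [DecidableEq m]

/-- trace functional against ρ₀ -/
noncomputable def trFun {k : Type*} [Fintype k] (r : Matrix k k ℂ) : Matrix k k ℂ →ₗ[ℂ] ℂ where
  toFun b := Matrix.trace (rᴴ * b)
  map_add' x y := by simp [Matrix.mul_add]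
  map_smul' c x := by simp [Matrix.mul_smul]

lemma perp_mem_image
    (S : Matrix n n ℂ →ₗ[ℂ] Matrix m m ℂ) (T : Matrix m m ℂ →ₗ[ℂ] Matrix n n ℂ)
    (hadj : ∀ (a : Matrix n n ℂ) (b : Matrix m m ℂ),
      Matrix.trace ((T b)ᴴ * a) = Matrix.trace (bᴴ * S a))
    (ρ₀ : Matrix m m ℂ) (x : Matrix n n ℂ)
    (hx : ∀ a, (∃ t : ℂ, S a = t • ρ₀) → Matrix.trace (aᴴ * x) = 0) :
    ∃ b : Matrix m m ℂ, Matrix.trace (ρ₀ᴴ * b) = 0 ∧ T b = x := by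
  classical
  set Kb : Submodule ℂ (Matrix m m ℂ) := LinearMap.ker (trFun ρ₀) with hKb
  set W : Submodule ℂ (Matrix n n ℂ) := Kb.map T with hW
  set WE : Submodule ℂ (EuclideanSpace ℂ (n × n)) := W.map (eMat.toLinearMap) with hWE
  have claimA : ∀ y ∈ WEᗮ, ∃ t : ℂ, S (eMat.symm y) = t • ρ₀ := by
    intro y hy
    set a : Matrix n n ℂ := eMat.symm y with ha
    have hya : eMat a = y := eMat.apply_symm_apply y
    have hy' : ∀ b ∈ Kb, Matrix.trace (bᴴ * S a) = 0 := by
      intro b hb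
      have hmem : eMat (T b) ∈ WE := by
        exact Submodule.mem_map_of_mem (Submodule.mem_map_of_mem hb)
      have h0 := (Submodule.mem_orthogonal WE y).mp hy _ hmem
      rw [← hya, inner_eMat, hadj a b] at h0
      exact h0
    have hmem2 : eMat (S a) ∈ (ℂ ∙ (eMat ρ₀ : EuclideanSpace ℂ (m × m)))ᗮᗮ := by
      rw [Submodule.mem_orthogonal]
      intro u hu
      have hub : eMat.symm u ∈ Kb := by
        rw [hKb, LinearMap.mem_ker]
        have := Submodule.mem_orthogonal_singleton_iff_inner_right.mp hu
        rw [show u = eMat (eMat.symm u) from (eMat.apply_symm_apply u).symm,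
          inner_eMat] at this
        exact this
      have := hy' _ hub
      rw [show u = eMat (eMat.symm u) from (eMat.apply_symm_apply u).symm, inner_eMat]
      exact this
    rw [Submodule.orthogonal_orthogonal] at hmem2
    obtain ⟨t, ht⟩ := Submodule.mem_span_singleton.mp hmem2
    refine ⟨t, eMat.injective ?_⟩
    rw [LinearEquiv.map_smul]
    exact ht.symm
  have hxmem : eMat x ∈ WEᗮᗮ := by
    rw [Submodule.mem_orthogonal]
    intro y hy
    obtain ⟨t, ht⟩ := claimA y hy
    have := hx (eMat.symm y) ⟨t, ht⟩
    rw [show y = eMat (eMat.symm y) from (eMat.apply_symm_apply y).symm, inner_eMat]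
    exact this
  rw [Submodule.orthogonal_orthogonal] at hxmem
  obtain ⟨w, hwW, hwx⟩ := hxmem
  have hwx' : w = x := eMat.injective hwx
  obtain ⟨b, hbK, hbT⟩ := hwW
  exact ⟨b, hbK, by rw [hbT, hwx']⟩

end H5

section H6
variable {k : Type*} [Fintype k] [DecidableEq k]

lemma commute_aeval {A : Type*} [CommSemiring ℂ] : True := trivial

lemma aeval_commute_right {R A : Type*} [CommSemiring R] [Semiring A] [Algebra R A]
    {x y : A} (h : Commute x y) (p : R[X]) : Commute (aeval x p) y := by
  rw [Polynomial.aeval_eq_sum_range]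
  exact Commute.sum_left _ _ _ fun i _ => (h.pow_left i).smul_left _

lemma aeval_unitary_conj (Un D : Matrix k k ℂ) (h1 : Un * Unᴴ = 1) (h2 : Unᴴ * Un = 1)
    (p : ℂ[X]) : aeval (Un * D * Unᴴ) p = Un * (aeval D p) * Unᴴ := by
  have hpow : ∀ i : ℕ, (Un * D * Unᴴ) ^ i = Un * D ^ i * Unᴴ := by
    intro i
    induction i with
    | zero => simp [h1]
    | succ j ih =>
      rw [pow_succ, pow_succ, ih]
      calc Un * D ^ j * Unᴴ * (Un * D * Unᴴ) = Un * D ^ j * (Unᴴ * Un) * D * Unᴴ := by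
            simp only [mul_assoc]
      _ = Un * (D ^ j * D) * Unᴴ := by rw [h2]; simp only [mul_assoc, Matrix.mul_one]
  rw [Polynomial.aeval_eq_sum_range, Polynomial.aeval_eq_sum_range]
  rw [Finset.mul_sum, Finset.sum_mul]
  refine Finset.sum_congr rfl fun i _ => ?_
  rw [hpow i, Matrix.mul_smul, Matrix.smul_mul]

lemma aeval_diagonal (d : k → ℂ) (p : ℂ[X]) :
    aeval (diagonal d) p = diagonal (fun a => p.eval (d a)) := by
  rw [Polynomial.aeval_eq_sum_range]
  have : ∀ a, p.eval (d a) = ∑ i ∈ Finset.range (p.natDegree + 1), p.coeff i • (d a) ^ i := by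
    intro a
    have := Polynomial.aeval_eq_sum_range (R := ℂ) (S := ℂ) (p := p) (d a)
    rw [Polynomial.eval_eq_sum_range]
    simp only [smul_eq_mul]
  simp_rw [this]
  ext a b
  by_cases hab : a = b
  · subst hab
    simp [Matrix.diagonal_pow, Matrix.sum_apply, Matrix.smul_apply, Pi.pow_apply]
  · simp [Matrix.diagonal_pow, Matrix.sum_apply, Matrix.smul_apply,
      Matrix.diagonal_apply_ne _ hab]
end H6

section H7
variable {k : Type*} [Fintype k] [DecidableEq k]

lemma exists_proj_poly (b : Matrix k k ℂ) (hb : b.IsHermitian)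
    (hns : ∀ c : ℂ, b ≠ c • 1) :
    ∃ q : Matrix k k ℂ, q.IsHermitian ∧ q * q = q ∧ q ≠ 0 ∧ q ≠ 1 ∧
      ∃ p : ℂ[X], q = aeval b p := by
  classical
  set Un : Matrix k k ℂ := (hb.eigenvectorUnitary : Matrix k k ℂ) with hUn
  have h1 : Un * Unᴴ = 1 := by
    rw [← Matrix.star_eq_conjTranspose]
    exact (Matrix.mem_unitaryGroup_iff).mp hb.eigenvectorUnitary.2
  have h2 : Unᴴ * Un = 1 := by
    rw [← Matrix.star_eq_conjTranspose]
    exact (Matrix.mem_unitaryGroup_iff').mp hb.eigenvectorUnitary.2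
  set ev : k → ℝ := hb.eigenvalues with hev
  have hspec : b = Un * diagonal (fun a => ((ev a : ℝ) : ℂ)) * Unᴴ := by
    have := hb.spectral_theorem
    rw [← Matrix.star_eq_conjTranspose]
    convert this using 2
    rw [Unitary.conjStarAlgAut_apply]
    rfl
  -- eigenvalues are not all equal
  have hnc : ∃ i j : k, ev i ≠ ev j := by
    by_contra hcon
    push_neg at hcon
    have hk : Nonempty k := by
      by_contra hk
      have : IsEmpty k := not_nonempty_iff.mp hk
      exact hns 0 (Subsingleton.elim _ _)
    obtain ⟨i₀⟩ := hk
    refine hns ((ev i₀ : ℂ)) ?_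
    rw [hspec]
    have : (diagonal (fun a => ((ev a : ℝ) : ℂ))) = ((ev i₀ : ℝ) : ℂ) • 1 := by
      ext a c
      by_cases hac : a = c
      · subst hac; simp [hcon a i₀]
      · simp [diagonal_apply_ne _ hac, Matrix.one_apply_ne hac]
    rw [this, Matrix.mul_smul, Matrix.smul_mul, Matrix.mul_one, h1]
  obtain ⟨i₀, j₀, hij⟩ := hnc
  set s : Finset ℂ := Finset.image (fun a => ((ev a : ℝ) : ℂ)) Finset.univ with hs
  set r : ℂ → ℂ := fun z => if z = ((ev i₀ : ℝ) : ℂ) then 1 else 0 with hr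
  set p : ℂ[X] := Lagrange.interpolate s id r with hp
  set d : k → ℂ := fun a => if ((ev a : ℝ) : ℂ) = ((ev i₀ : ℝ) : ℂ) then 1 else 0 with hd
  have heval : ∀ a : k, p.eval ((ev a : ℝ) : ℂ) = d a := by
    intro a
    have hmem : ((ev a : ℝ) : ℂ) ∈ s := Finset.mem_image_of_mem _ (Finset.mem_univ a)
    have := Lagrange.eval_interpolate_at_node (v := id) (r := r) (Set.injOn_id _) hmem
    exact this
  set q : Matrix k k ℂ := Un * diagonal d * Unᴴ with hq
  have hdstar : star d = d := by
    funext a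
    simp only [Pi.star_apply, hd]
    split_ifs <;> simp
  have hdd : (fun a => d a * d a) = d := by
    funext a
    simp only [hd]
    split_ifs <;> simp
  have hrecover : Unᴴ * q * Un = diagonal d := by
    rw [hq]
    calc Unᴴ * (Un * diagonal d * Unᴴ) * Un
        = (Unᴴ * Un) * diagonal d * (Unᴴ * Un) := by simp only [mul_assoc]
    _ = diagonal d := by rw [h2, Matrix.one_mul, Matrix.mul_one]
  refine ⟨q, ?_, ?_, ?_, ?_, p, ?_⟩
  · unfold Matrix.IsHermitian
    rw [hq, conjTranspose_mul, conjTranspose_mul, conjTranspose_conjTranspose,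
      diagonal_conjTranspose, hdstar]
    simp only [mul_assoc]
  · rw [hq]
    calc Un * diagonal d * Unᴴ * (Un * diagonal d * Unᴴ)
        = Un * diagonal d * (Unᴴ * Un) * diagonal d * Unᴴ := by simp only [mul_assoc]
    _ = Un * (diagonal d * diagonal d) * Unᴴ := by
        rw [h2]; simp only [Matrix.mul_one, mul_assoc]
    _ = Un * diagonal d * Unᴴ := by rw [diagonal_mul_diagonal, hdd]
  · intro h0
    have : diagonal d = 0 := by rw [← hrecover, h0, Matrix.mul_zero, Matrix.zero_mul]
    have hentry := congrFun (congrFun this i₀) i₀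
    simp [hd] at hentry
  · intro h0
    have : diagonal d = 1 := by rw [← hrecover, h0, Matrix.mul_one, h2]
    have hentry := congrFun (congrFun this j₀) j₀
    have hne : ((ev j₀ : ℝ) : ℂ) ≠ ((ev i₀ : ℝ) : ℂ) := by
      simpa using fun h => hij (Complex.ofReal_injective h).symm
    simp [hd, hne, Matrix.one_apply_eq] at hentry
    exact hij hentry.symm
  · have hfun : (fun a => p.eval ((ev a : ℝ) : ℂ)) = d := funext heval
    rw [hspec, aeval_unitary_conj _ _ h1 h2, aeval_diagonal, hfun]
end H7
lemma real_smul_mat {k : Type*} [Fintype k] (r : ℝ) (A : Matrix k k ℂ) :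
    r • A = ((r : ℂ)) • A := by
  ext i j
  simp [Matrix.smul_apply, Complex.real_smul]

end AuxHelpers

/-- for `J = S⁻¹(ℂ ρ₀)` with `S* = T` an injective unital *-homomorphism
and `ρ₀ = S ρ` for an invertible state `ρ`, a PVM `M` is extremal in `M_J(A,U)` iff the
only projections `p₀ ∈ A₀` with `S*(p₀) ∈ {M}'` are `p₀ = 0` and `p₀ = I`. -/
theorem extreme_PVM_iff_commutant_projections
    (S : Matrix n n ℂ →ₗ[ℂ] Matrix m m ℂ) (T : Matrix m m ℂ →ₗ[ℂ] Matrix n n ℂ)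
    (hSCP : (choi S).PosSemidef) (hStp : ∀ a, Matrix.trace (S a) = Matrix.trace a)
    (hadj : ∀ (a : Matrix n n ℂ) (b : Matrix m m ℂ),
      Matrix.trace ((T b)ᴴ * a) = Matrix.trace (bᴴ * S a))
    (hTinj : Function.Injective T)
    (hTmul : ∀ x y : Matrix m m ℂ, T (x * y) = T x * T y)
    (hTstar : ∀ x : Matrix m m ℂ, T xᴴ = (T x)ᴴ)
    (hTone : T 1 = 1)
    (ρ : Matrix n n ℂ) (hρ : ρ.PosDef) (hρtr : Matrix.trace ρ = 1)
    (ρ₀ : Matrix m m ℂ) (hρ₀ : ρ₀ = S ρ)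
    {U : Type*} [Fintype U]
    (M : U → Matrix n n ℂ)
    (hproj : ∀ u, (M u).IsHermitian ∧ M u * M u = M u)
    (hsum : ∑ u, M u = 1) :
    M ∈ Set.extremePoints ℝ
        {N : U → Matrix n n ℂ |
          (∀ u, (N u).PosSemidef) ∧
            ∀ a : Matrix n n ℂ, (∃ t : ℂ, S a = t • ρ₀) →
              Matrix.trace (aᴴ * ((∑ u, N u) - 1)) = 0} ↔
      ∀ p₀ : Matrix m m ℂ, p₀.IsHermitian → p₀ * p₀ = p₀ →
        (∀ u, T p₀ * M u = M u * T p₀) → p₀ = 0 ∨ p₀ = 1 := by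
  classical
  set SS : Set (U → Matrix n n ℂ) := {N : U → Matrix n n ℂ |
      (∀ u, (N u).PosSemidef) ∧
        ∀ a : Matrix n n ℂ, (∃ t : ℂ, S a = t • ρ₀) →
          Matrix.trace (aᴴ * ((∑ u, N u) - 1)) = 0} with hSS
  have hMpsd : ∀ u, (M u).PosSemidef := fun u => proj_psd (hproj u).1 (hproj u).2
  have hMmem : M ∈ SS := by
    refine ⟨hMpsd, fun a _ => ?_⟩
    rw [hsum, sub_self, Matrix.mul_zero, trace_zero]
  have htrρ₀ : Matrix.trace ρ₀ = 1 := by rw [hρ₀, hStp, hρtr]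
  constructor
  · -- extreme → commutant trivial
    intro hext p₀ hp₀h hp₀i hp₀c
    by_contra hcon
    push_neg at hcon
    obtain ⟨hp0, hp1⟩ := hcon
    set P : Matrix n n ℂ := T p₀ with hP
    have hPherm : Pᴴ = P := by rw [hP, ← hTstar, hp₀h.eq]
    have hPidem : P * P = P := by rw [hP, ← hTmul, hp₀i]
    set lam : ℂ := Matrix.trace (Pᴴ * ρ) with hlam
    have hlam0 : 0 ≤ lam := by
      have hpsd : (P * ρ * Pᴴ).PosSemidef := hρ.posSemidef.mul_mul_conjTranspose_same P
      have heq : Matrix.trace (P * ρ * Pᴴ) = lam := by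
        rw [hPherm, trace_mul_cycle, hPidem, hlam, hPherm]
      exact heq ▸ psd_trace_nonneg hpsd
    have hlam1 : lam ≤ 1 := by
      have hpsd : ((1 - P) * ρ * (1 - P)ᴴ).PosSemidef :=
        hρ.posSemidef.mul_mul_conjTranspose_same (1 - P)
      have h1P : (1 - P)ᴴ = 1 - P := by
        rw [conjTranspose_sub, conjTranspose_one, hPherm]
      have htr : Matrix.trace ((1 - P) * ρ * (1 - P)ᴴ) = 1 - lam := by
        rw [h1P]
        have hexp : (1 - P) * ρ * (1 - P) = ρ - P * ρ - ρ * P + P * ρ * P := by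
          noncomm_ring
        rw [hexp]
        rw [trace_add, trace_sub, trace_sub]
        have e1 : Matrix.trace (P * ρ * P) = lam := by
          rw [trace_mul_cycle, hPidem, hlam, hPherm]
        have e2 : Matrix.trace (ρ * P) = lam := by
          rw [← trace_mul_comm, hlam, hPherm]
        have e3 : Matrix.trace (P * ρ) = lam := by rw [hlam, hPherm]
        rw [e1, e2, e3, hρtr]
        ring
      have hnn := psd_trace_nonneg hpsd
      rw [htr] at hnn
      exact sub_nonneg.mp hnn
    have hlamre : (starRingEnd ℂ) lam = lam := by
      have him : lam.im = 0 := (Complex.le_def.mp hlam0).2.symm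
      exact Complex.conj_eq_iff_im.mpr him
    set lr : ℝ := lam.re with hlr
    have hlrc : (lr : ℂ) = lam := Complex.conj_eq_iff_re.mp hlamre
    have hlr0 : 0 ≤ lr := by
      have := (Complex.le_def.mp hlam0).1
      simpa using this
    have hlr1 : lr ≤ 1 := by
      have := (Complex.le_def.mp hlam1).1
      simpa using this
    set D : U → Matrix n n ℂ := fun u => (P - lam • 1) * M u with hD
    have hDelta : ∑ u, D u = P - lam • 1 := by
      rw [hD, ← Finset.mul_sum, hsum, Matrix.mul_one]
    have hΔT : P - lam • 1 = T (p₀ - lam • 1) := by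
      rw [map_sub, LinearMap.map_smul, hTone, hP]
    have hlamp₀ : Matrix.trace (p₀ * ρ₀) = lam := by
      conv_lhs => rw [← hp₀h.eq]
      rw [hρ₀, ← hadj ρ p₀, hlam, hP]
    have htrcond : ∀ a : Matrix n n ℂ, (∃ t : ℂ, S a = t • ρ₀) →
        Matrix.trace (aᴴ * (P - lam • 1)) = 0 := by
      rintro a ⟨t, ht⟩
      have h1 : Matrix.trace ((T (p₀ - lam • 1))ᴴ * a) = 0 := by
        rw [hadj, ht]
        have hexp : (p₀ - lam • 1)ᴴ = p₀ - (starRingEnd ℂ) lam • 1 := by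
          rw [conjTranspose_sub, hp₀h.eq, conjTranspose_smul, conjTranspose_one]
          rfl
        rw [hexp, hlamre, Matrix.sub_mul, Matrix.smul_mul, Matrix.one_mul,
          trace_sub, Matrix.mul_smul, trace_smul, trace_smul, hlamp₀, trace_smul, htrρ₀]
        simp only [smul_eq_mul, mul_one]
        ring
      calc Matrix.trace (aᴴ * (P - lam • 1))
          = Matrix.trace (((T (p₀ - lam • 1))ᴴ * a)ᴴ) := by
            rw [conjTranspose_mul, conjTranspose_conjTranspose, hΔT]
      _ = star (Matrix.trace ((T (p₀ - lam • 1))ᴴ * a)) := trace_conjTranspose _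
      _ = 0 := by rw [h1, star_zero]
    -- positivity building blocks
    have hPM : ∀ u, (P * M u).PosSemidef := by
      intro u
      refine proj_psd ?_ ?_
      · show (P * M u)ᴴ = P * M u
        rw [conjTranspose_mul, hPherm, (hproj u).1.eq, ← hp₀c u]
      · calc P * M u * (P * M u) = P * (M u * P) * M u := by simp only [mul_assoc]
        _ = P * (P * M u) * M u := by rw [← hp₀c u]
        _ = (P * P) * (M u * M u) := by simp only [mul_assoc]
        _ = P * M u := by rw [hPidem, (hproj u).2]
    have hQc : ∀ u, (1 - P) * M u = M u * (1 - P) := by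
      intro u
      rw [Matrix.sub_mul, Matrix.mul_sub, Matrix.one_mul, Matrix.mul_one, hp₀c u]
    have hQM : ∀ u, ((1 - P) * M u).PosSemidef := by
      intro u
      refine proj_psd ?_ ?_
      · show ((1 - P) * M u)ᴴ = (1 - P) * M u
        rw [conjTranspose_mul, conjTranspose_sub, conjTranspose_one, hPherm,
          (hproj u).1.eq, ← hQc u]
      · calc (1 - P) * M u * ((1 - P) * M u) = (1 - P) * (M u * (1 - P)) * M u := by
              simp only [mul_assoc]
        _ = (1 - P) * ((1 - P) * M u) * M u := by rw [← hQc u]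
        _ = ((1 - P) * (1 - P)) * (M u * M u) := by simp only [mul_assoc]
        _ = (1 - P) * M u := by
            rw [(hproj u).2]
            congr 1
            simp only [Matrix.sub_mul, Matrix.mul_sub, Matrix.one_mul, Matrix.mul_one, hPidem]
            abel
    have hDexp : ∀ u, D u = P * M u - lam • M u := by
      intro u
      show (P - lam • 1) * M u = _
      rw [Matrix.sub_mul, Matrix.smul_mul, Matrix.one_mul]
    have hQMexp : ∀ u, (1 - P) * M u = M u - P * M u := by
      intro u
      rw [Matrix.sub_mul, Matrix.one_mul]
    set N₁ : U → Matrix n n ℂ := fun u => M u + D u with hN₁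
    set N₂ : U → Matrix n n ℂ := fun u => M u - D u with hN₂
    have hN₁psd : ∀ u, (N₁ u).PosSemidef := by
      intro u
      have hdecomp : N₁ u = ((2 - lr : ℝ) : ℂ) • (P * M u)
          + ((1 - lr : ℝ) : ℂ) • ((1 - P) * M u) := by
        rw [hN₁]
        show M u + D u = _
        rw [hDexp u, hQMexp u]
        push_cast
        rw [hlrc]
        module
      rw [hdecomp]
      exact (psd_smul (hPM u) (by linarith)).add (psd_smul (hQM u) (by linarith))
    have hN₂psd : ∀ u, (N₂ u).PosSemidef := by
      intro u
      have hdecomp : N₂ u = ((lr : ℝ) : ℂ) • (P * M u)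
          + ((1 + lr : ℝ) : ℂ) • ((1 - P) * M u) := by
        rw [hN₂]
        show M u - D u = _
        rw [hDexp u, hQMexp u]
        push_cast
        rw [hlrc]
        module
      rw [hdecomp]
      exact (psd_smul (hPM u) (by linarith)).add (psd_smul (hQM u) (by linarith))
    have hN₁sum : (∑ u, N₁ u) - 1 = P - lam • 1 := by
      rw [hN₁]
      show (∑ u, (M u + D u)) - 1 = _
      rw [Finset.sum_add_distrib, hsum, hDelta]
      abel
    have hN₂sum : (∑ u, N₂ u) - 1 = -(P - lam • 1) := by
      rw [hN₂]
      show (∑ u, (M u - D u)) - 1 = _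
      rw [Finset.sum_sub_distrib, hsum, hDelta]
      abel
    have hN₁mem : N₁ ∈ SS := by
      refine ⟨hN₁psd, fun a ha => ?_⟩
      rw [hN₁sum]
      exact htrcond a ha
    have hN₂mem : N₂ ∈ SS := by
      refine ⟨hN₂psd, fun a ha => ?_⟩
      rw [hN₂sum, Matrix.mul_neg, trace_neg, htrcond a ha, neg_zero]
    have hseg : M ∈ openSegment ℝ N₁ N₂ := by
      refine ⟨1/2, 1/2, by norm_num, by norm_num, by norm_num, ?_⟩
      funext u
      show (1/2 : ℝ) • N₁ u + (1/2 : ℝ) • N₂ u = M u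
      rw [hN₁, hN₂]
      show (1/2 : ℝ) • (M u + D u) + (1/2 : ℝ) • (M u - D u) = M u
      module
    obtain ⟨-, hkey⟩ := mem_extremePoints.mp hext
    obtain ⟨hN₁M, -⟩ := hkey N₁ hN₁mem N₂ hN₂mem hseg
    have hDu : ∀ u, D u = 0 := by
      intro u
      have := congrFun hN₁M u
      have h2 : M u + D u = M u := this
      exact (add_eq_left).mp h2
    have hΔ0 : P - lam • 1 = 0 := by
      rw [← hDelta]
      exact Finset.sum_eq_zero fun u _ => hDu u
    have hb0 : p₀ - lam • 1 = 0 := by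
      apply hTinj
      rw [← hΔT, hΔ0, map_zero]
    have hp₀lam : p₀ = lam • (1 : Matrix m m ℂ) := sub_eq_zero.mp hb0
    have hsq : (lam * lam - lam) • (1 : Matrix m m ℂ) = 0 := by
      have := hp₀i
      rw [hp₀lam, smul_mul_smul_comm, Matrix.one_mul] at this
      rw [sub_smul, this]
      abel
    rcases smul_eq_zero.mp hsq with hc | hone
    · have : lam * (lam - 1) = 0 := by ring_nf; ring_nf at hc; linear_combination hc
      rcases mul_eq_zero.mp this with h0 | h1
      · exact hp0 (by rw [hp₀lam, h0, zero_smul])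
      · have : lam = 1 := by linear_combination h1
        exact hp1 (by rw [hp₀lam, this, one_smul])
    · exact hp0 (by rw [hp₀lam, hone, smul_zero])
  · -- commutant trivial → extreme
    intro hcomm
    rw [mem_extremePoints]
    refine ⟨hMmem, ?_⟩
    have key : ∀ (ca cb : ℝ), 0 < ca → 0 < cb →
        ∀ N₁ N₂ : U → Matrix n n ℂ, N₁ ∈ SS → N₂ ∈ SS →
        ca • N₁ + cb • N₂ = M → N₁ = M := by
      intro ca cb hca hcb N₁ N₂ hN₁ hN₂ heq
      -- step 1 : N₁ u is pinched by M u
      have hpinch : ∀ u, N₁ u = M u * N₁ u * M u := by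
        intro u
        set Q : Matrix n n ℂ := 1 - M u with hQ
        have hQh : Qᴴ = Q := by
          rw [hQ, conjTranspose_sub, conjTranspose_one, (hproj u).1.eq]
        have hMQ : M u * Q = 0 := by
          rw [hQ, Matrix.mul_sub, Matrix.mul_one, (hproj u).2, sub_self]
        have hQM0 : Q * M u = 0 := by
          rw [hQ, Matrix.sub_mul, Matrix.one_mul, (hproj u).2, sub_self]
        have hequ : ca • N₁ u + cb • N₂ u = M u := congrFun heq u
        have hzero : (ca : ℂ) • (Q * N₁ u * Q) + (cb : ℂ) • (Q * N₂ u * Q) = 0 := by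
          have := congrArg (fun X => Q * X * Q) hequ
          rw [Matrix.mul_add, Matrix.add_mul] at this
          rw [real_smul_mat, real_smul_mat] at this
          rw [Matrix.mul_smul, Matrix.smul_mul, Matrix.mul_smul, Matrix.smul_mul] at this
          rw [this]
          calc Q * M u * Q = Q * (M u * Q) := by rw [Matrix.mul_assoc]
          _ = 0 := by rw [hMQ, Matrix.mul_zero]
        have hpsd1 : (Q * N₁ u * Q).PosSemidef := by
          have := (hN₁.1 u).mul_mul_conjTranspose_same Q
          rwa [hQh] at this
        have hpsd2 : (Q * N₂ u * Q).PosSemidef := by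
          have := (hN₂.1 u).mul_mul_conjTranspose_same Q
          rwa [hQh] at this
        have hQN1Q : Q * N₁ u * Q = 0 := by
          have h0 := psd_add_eq_zero (psd_smul hpsd1 (le_of_lt hca))
            (psd_smul hpsd2 (le_of_lt hcb)) hzero
          have hcane : (ca : ℂ) ≠ 0 := by
            simpa using ne_of_gt hca
          rcases smul_eq_zero.mp h0 with h | h
          · exact absurd h hcane
          · exact h
        have hNQ : N₁ u * Q = 0 := psd_mul_eq_zero (hN₁.1 u) hQh hQN1Q
        have hQN : Q * N₁ u = 0 := by
          have := congrArg conjTranspose hNQ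
          rwa [conjTranspose_mul, hQh, (hN₁.1 u).1.eq, conjTranspose_zero] at this
        have h1 : N₁ u * M u = N₁ u := by
          have : N₁ u * (1 - M u) = 0 := hNQ
          rw [Matrix.mul_sub, Matrix.mul_one, sub_eq_zero] at this
          exact this.symm
        have h2 : M u * N₁ u = N₁ u := by
          have : (1 - M u) * N₁ u = 0 := hQN
          rw [Matrix.sub_mul, Matrix.one_mul, sub_eq_zero] at this
          exact this.symm
        rw [h2, h1]
      set D : U → Matrix n n ℂ := fun u => N₁ u - M u with hD
      have hDpinch : ∀ u, D u = M u * D u * M u := by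
        intro u
        show N₁ u - M u = M u * (N₁ u - M u) * M u
        rw [Matrix.mul_sub, Matrix.sub_mul, ← hpinch u, (hproj u).2, (hproj u).2]
      set Δ : Matrix n n ℂ := ∑ u, D u with hΔ
      have hΔtr : ∀ a : Matrix n n ℂ, (∃ t : ℂ, S a = t • ρ₀) →
          Matrix.trace (aᴴ * Δ) = 0 := by
        intro a ha
        have := hN₁.2 a ha
        have hsum1 : (∑ u, N₁ u) - 1 = Δ := by
          calc (∑ u, N₁ u) - 1 = (∑ u, N₁ u) - ∑ u, M u := by rw [hsum]
          _ = ∑ u, (N₁ u - M u) := (Finset.sum_sub_distrib _ _).symm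
          _ = Δ := rfl
        rwa [hsum1] at this
      obtain ⟨b, hbρ, hbT⟩ := perp_mem_image S T hadj ρ₀ Δ hΔtr
      have hΔMv : ∀ v, Δ * M v = D v := by
        intro v
        rw [hΔ, Finset.sum_mul]
        rw [Finset.sum_eq_single v]
        · rw [hDpinch v, Matrix.mul_assoc, Matrix.mul_assoc, (hproj v).2,
            ← Matrix.mul_assoc, ← hDpinch v]
        · intro u _ huv
          rw [hDpinch u, Matrix.mul_assoc, Matrix.mul_assoc,
            pvm_orth M hproj hsum huv, Matrix.mul_zero, Matrix.mul_zero]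
        · intro h
          exact absurd (Finset.mem_univ v) h
      have hMvΔ : ∀ v, M v * Δ = D v := by
        intro v
        rw [hΔ, Finset.mul_sum]
        rw [Finset.sum_eq_single v]
        · rw [hDpinch v, ← Matrix.mul_assoc, ← Matrix.mul_assoc, (hproj v).2,
            ← hDpinch v]
        · intro u _ huv
          rw [hDpinch u, ← Matrix.mul_assoc, ← Matrix.mul_assoc,
            pvm_orth M hproj hsum (Ne.symm huv), Matrix.zero_mul, Matrix.zero_mul]
        · intro h
          exact absurd (Finset.mem_univ v) h
      have hΔherm : Δᴴ = Δ := by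
        rw [hΔ]
        rw [conjTranspose_sum]
        refine Finset.sum_congr rfl fun u _ => ?_
        show (N₁ u - M u)ᴴ = N₁ u - M u
        rw [conjTranspose_sub, (hN₁.1 u).1.eq, (hproj u).1.eq]
      have hbherm : b.IsHermitian := by
        have : T bᴴ = T b := by rw [hTstar, hbT]; exact hΔherm
        exact hTinj this
      have hΔ0 : Δ = 0 := by
        by_cases hbs : ∃ c : ℂ, b = c • 1
        · obtain ⟨c, rfl⟩ := hbs
          have hc0 : c = 0 := by
            have : Matrix.trace (ρ₀ᴴ * (c • (1 : Matrix m m ℂ))) = c * star (Matrix.trace ρ₀) := by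
              rw [Matrix.mul_smul, Matrix.mul_one, trace_smul, smul_eq_mul,
                trace_conjTranspose]
            rw [this, htrρ₀] at hbρ
            simpa using hbρ
          rw [← hbT, hc0, zero_smul, map_zero]
        · push_neg at hbs
          obtain ⟨q, hqh, hqi, hq0, hq1, p, hqp⟩ := exists_proj_poly b hbherm hbs
          exfalso
          set TA : Matrix m m ℂ →ₐ[ℂ] Matrix n n ℂ := AlgHom.ofLinearMap T hTone hTmul with hTA
          have hTq : T q = aeval Δ p := by
            have := Polynomial.aeval_algHom_apply TA b p
            rw [hqp]
            show TA (aeval b p) = aeval Δ p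
            rw [← this]
            show aeval (T b) p = aeval Δ p
            rw [hbT]
          have hqcomm : ∀ u, T q * M u = M u * T q := by
            intro u
            have hcΔ : Commute Δ (M u) := by
              unfold Commute SemiconjBy
              rw [hΔMv u, hMvΔ u]
            have := aeval_commute_right hcΔ p
            rw [hTq]
            exact this
          rcases hcomm q hqh hqi hqcomm with h | h
          · exact hq0 h
          · exact hq1 h
      funext u
      have : D u = 0 := by rw [← hΔMv u, hΔ0, Matrix.zero_mul]
      have h2 : N₁ u - M u = 0 := this
      rw [sub_eq_zero] at h2
      exact h2
    intro N₁ hN₁ N₂ hN₂ hseg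
    obtain ⟨ca, cb, hca, hcb, hcab, heq⟩ := hseg
    constructor
    · exact key ca cb hca hcb N₁ N₂ hN₁ hN₂ heq
    · refine key cb ca hcb hca N₂ N₁ hN₂ hN₁ ?_
      rw [add_comm] at heq
      exact heq
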